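/- Additivity of the EdgeTransitions objective over source nodes: F_ET(D) = ∑_{u∈V} x(u) · h_u(D_u), where D_u = {v : (u,v) ∈ D}, ρ_u = ∑_{v∈D_u} P(u,v) < 1, and h_u(D_u) = (1−ρ_u) − (∑_{v∉D_u} P(u,v)²)/(1−ρ_u). Consequently, for a fixed allocation (m_u)_{u∈V} of monitored out-edges per node with ∑ m_u = k, the optimal D with |D_u| = m_u is obtained by independently choosing for each node u its m_u largest-probability out-edges. -/

import Mathlib

open Finset

private lemma sum_sq_expand {V : Type*} (w : V → ℝ) (T : Finset V) (t : ℝ) (ht : t ≠ 0)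
    (hT : ∑ v ∈ T, w v = t) :
    t * ∑ v ∈ T, (w v / t) * (1 - w v / t) = t - (∑ v ∈ T, (w v)^2) / t := by
  have h1 : ∑ v ∈ T, (w v / t) * (1 - w v / t)
      = (∑ v ∈ T, w v) / t - (∑ v ∈ T, (w v)^2) / t^2 := by
    rw [sum_div, sum_div, ← Finset.sum_sub_distrib]
    apply Finset.sum_congr rfl
    intro v _
    field_simp
  rw [h1, hT]
  field_simp

private lemma swap_ineq (t q α β : ℝ) (ht : 0 < t) (ht₁ : 0 < t - α + β)
    (hβα : β ≤ α) (hq : α^2 ≤ q) :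
    (t - α + β) - (q - α^2 + β^2)/(t - α + β) ≤ t - q/t := by
  have key : (0:ℝ) ≤ (α - β) * (t^2 + q - 2*t*α) :=
    mul_nonneg (sub_nonneg.2 hβα) (by nlinarith [sq_nonneg (t - α)])
  have e1 : (t - α + β) - (q - α^2 + β^2)/(t - α + β)
      = ((t - α + β)^2 - (q - α^2 + β^2))/(t - α + β) := by field_simp
  have e2 : t - q/t = (t^2 - q)/t := by field_simp
  rw [e1, e2, div_le_div_iff₀ ht₁ ht]
  nlinarith [key]

private lemma sum_le_big {V : Type*} [Fintype V] [DecidableEq V] (w : V → ℝ) (B : Finset V)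
    (hbig : ∀ v ∈ B, ∀ u ∉ B, w u ≤ w v) :
    ∀ n (S : Finset V), (S \ B).card = n → S.card = B.card →
      ∑ v ∈ S, w v ≤ ∑ v ∈ B, w v := by
  intro n
  induction n with
  | zero =>
    intro S h0 hcard
    have hSB : S ⊆ B := by
      have : S \ B = ∅ := card_eq_zero.mp h0
      intro v hv
      by_contra hvB
      exact absurd (mem_sdiff.2 ⟨hv, hvB⟩) (by rw [this]; exact notMem_empty v)
    rw [Finset.eq_of_subset_of_card_le hSB (le_of_eq hcard.symm)]
  | succ n ih =>
    intro S hn hcard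
    obtain ⟨b, hb⟩ : (S \ B).Nonempty := by rw [← card_pos, hn]; omega
    have hbS : b ∈ S := (mem_sdiff.1 hb).1
    have hbB : b ∉ B := (mem_sdiff.1 hb).2
    have hcardBS : (B \ S).card = n + 1 := by
      have h1 := Finset.card_sdiff_add_card_inter B S
      have h2 := Finset.card_sdiff_add_card_inter S B
      rw [Finset.inter_comm] at h1
      omega
    obtain ⟨a, ha⟩ : (B \ S).Nonempty := by rw [← card_pos, hcardBS]; omega
    have haB : a ∈ B := (mem_sdiff.1 ha).1
    have haS : a ∉ S := (mem_sdiff.1 ha).2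
    set S₁ := insert a (S.erase b) with hS₁
    have haeb : a ∉ S.erase b := fun h => haS (mem_of_mem_erase h)
    have hcard₁ : S₁.card = B.card := by
      have hSpos : 0 < S.card := card_pos.2 ⟨b, hbS⟩
      rw [hS₁, card_insert_of_notMem haeb, card_erase_of_mem hbS]
      omega
    have hsd : S₁ \ B = (S \ B).erase b := by
      ext v
      simp only [hS₁, mem_sdiff, mem_insert, mem_erase]
      constructor
      · rintro ⟨h1 | ⟨h2, h3⟩, h4⟩
        · exact absurd haB (h1 ▸ h4)
        · exact ⟨h2, h3, h4⟩
      · rintro ⟨h1, h2, h3⟩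
        exact ⟨Or.inr ⟨h1, h2⟩, h3⟩
    have hn₁ : (S₁ \ B).card = n := by
      rw [hsd, card_erase_of_mem hb, hn]
      omega
    have hsum₁ : ∑ v ∈ S₁, w v = ∑ v ∈ S, w v - w b + w a := by
      rw [hS₁, sum_insert haeb, Finset.sum_erase_eq_sub hbS]; ring
    have hwba : w b ≤ w a := hbig a haB b hbB
    calc ∑ v ∈ S, w v ≤ ∑ v ∈ S₁, w v := by rw [hsum₁]; linarith
      _ ≤ ∑ v ∈ B, w v := ih S₁ hn₁ hcard₁

private lemma g_le_big {V : Type*} [Fintype V] [DecidableEq V] (w : V → ℝ)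
    (hw : ∀ v, 0 ≤ w v) (B : Finset V)
    (hbig : ∀ v ∈ B, ∀ u ∉ B, w u ≤ w v)
    (htB : 0 < ∑ v ∈ univ \ B, w v) :
    ∀ n (S : Finset V), (S \ B).card = n → S.card = B.card →
      0 < ∑ v ∈ univ \ S, w v →
      (∑ v ∈ univ \ B, w v) - (∑ v ∈ univ \ B, (w v)^2)/(∑ v ∈ univ \ B, w v)
        ≤ (∑ v ∈ univ \ S, w v) - (∑ v ∈ univ \ S, (w v)^2)/(∑ v ∈ univ \ S, w v) := by
  intro n
  induction n with
  | zero =>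
    intro S h0 hcard _
    have hSB : S ⊆ B := by
      have he : S \ B = ∅ := card_eq_zero.mp h0
      intro v hv
      by_contra hvB
      exact absurd (mem_sdiff.2 ⟨hv, hvB⟩) (by rw [he]; exact notMem_empty v)
    rw [Finset.eq_of_subset_of_card_le hSB (le_of_eq hcard.symm)]
  | succ n ih =>
    intro S hn hcard htS
    obtain ⟨b, hb⟩ : (S \ B).Nonempty := by rw [← card_pos, hn]; omega
    have hbS : b ∈ S := (mem_sdiff.1 hb).1
    have hbB : b ∉ B := (mem_sdiff.1 hb).2
    have hcardBS : (B \ S).card = n + 1 := by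
      have h1 := Finset.card_sdiff_add_card_inter B S
      have h2 := Finset.card_sdiff_add_card_inter S B
      rw [Finset.inter_comm] at h1
      omega
    obtain ⟨a, ha⟩ : (B \ S).Nonempty := by rw [← card_pos, hcardBS]; omega
    have haB : a ∈ B := (mem_sdiff.1 ha).1
    have haS : a ∉ S := (mem_sdiff.1 ha).2
    set S₁ := insert a (S.erase b) with hS₁
    have haeb : a ∉ S.erase b := fun h => haS (mem_of_mem_erase h)
    have hcard₁ : S₁.card = B.card := by
      have hSpos : 0 < S.card := card_pos.2 ⟨b, hbS⟩
      rw [hS₁, card_insert_of_notMem haeb, card_erase_of_mem hbS]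
      omega
    have hsd : S₁ \ B = (S \ B).erase b := by
      ext v
      simp only [hS₁, mem_sdiff, mem_insert, mem_erase]
      constructor
      · rintro ⟨h1 | ⟨h2, h3⟩, h4⟩
        · exact absurd haB (h1 ▸ h4)
        · exact ⟨h2, h3, h4⟩
      · rintro ⟨h1, h2, h3⟩
        exact ⟨Or.inr ⟨h1, h2⟩, h3⟩
    have hn₁ : (S₁ \ B).card = n := by
      rw [hsd, card_erase_of_mem hb, hn]
      omega
    -- sums over complements expressed via insert/erase
    have compl_sum : ∀ f : V → ℝ, ∑ v ∈ univ \ S₁, f v = ∑ v ∈ univ \ S, f v - f a + f b := by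
      intro f
      have h1 : ∑ v ∈ univ \ S₁, f v = ∑ v, f v - ∑ v ∈ S₁, f v :=
        Finset.sum_sdiff_eq_sub (subset_univ _)
      have h2 : ∑ v ∈ univ \ S, f v = ∑ v, f v - ∑ v ∈ S, f v :=
        Finset.sum_sdiff_eq_sub (subset_univ _)
      have h3 : ∑ v ∈ S₁, f v = ∑ v ∈ S, f v - f b + f a := by
        rw [hS₁, sum_insert haeb, Finset.sum_erase_eq_sub hbS]; ring
      rw [h1, h2, h3]; ring
    have hwba : w b ≤ w a := hbig a haB b hbB
    have ht₁ : 0 < ∑ v ∈ univ \ S₁, w v := by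
      have hle : ∑ v ∈ S₁, w v ≤ ∑ v ∈ B, w v := sum_le_big w B hbig n S₁ hn₁ hcard₁
      have h1 : ∑ v ∈ univ \ S₁, w v = ∑ v, w v - ∑ v ∈ S₁, w v :=
        Finset.sum_sdiff_eq_sub (subset_univ _)
      have h2 : ∑ v ∈ univ \ B, w v = ∑ v, w v - ∑ v ∈ B, w v :=
        Finset.sum_sdiff_eq_sub (subset_univ _)
      rw [h1]; rw [h2] at htB; linarith
    have haq : (w a)^2 ≤ ∑ v ∈ univ \ S, (w v)^2 :=
      Finset.single_le_sum (f := fun v => (w v)^2) (fun v _ => sq_nonneg (w v))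
        (mem_sdiff.2 ⟨mem_univ a, haS⟩)
    have hswap :
        (∑ v ∈ univ \ S₁, w v) - (∑ v ∈ univ \ S₁, (w v)^2)/(∑ v ∈ univ \ S₁, w v)
          ≤ (∑ v ∈ univ \ S, w v) - (∑ v ∈ univ \ S, (w v)^2)/(∑ v ∈ univ \ S, w v) := by
      rw [compl_sum w] at ht₁ ⊢
      rw [compl_sum (fun v => (w v)^2)]
      exact swap_ineq _ _ _ _ htS ht₁ hwba haq
    exact le_trans (ih S₁ hn₁ hcard₁ ht₁) hswap


theorem edgeTransitions_separable
    {V : Type*} [Fintype V] [DecidableEq V]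
    (x : V → ℝ) (hx : ∀ u, 0 ≤ x u)
    (P : V → V → ℝ) (hP0 : ∀ u v, 0 ≤ P u v) (hP1 : ∀ u v, P u v ≤ 1)
    (hrow : ∀ u, ∑ v, P u v = 1)
    (D : Finset (V × V))
    (hρ : ∀ u, ∑ v ∈ univ.filter (fun v => (u, v) ∈ D), P u v < 1) :
    -- additivity over source nodes
    (∑ u, x u * (1 - ∑ v ∈ univ.filter (fun v => (u, v) ∈ D), P u v) *
        ∑ v ∈ univ.filter (fun v => (u, v) ∉ D),
          (P u v / (1 - ∑ w ∈ univ.filter (fun w => (u, w) ∈ D), P u w)) *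
            (1 - P u v / (1 - ∑ w ∈ univ.filter (fun w => (u, w) ∈ D), P u w))
      = ∑ u, x u *
          ((1 - ∑ v ∈ univ.filter (fun v => (u, v) ∈ D), P u v) -
            (∑ v ∈ univ.filter (fun v => (u, v) ∉ D), (P u v) ^ 2) /
              (1 - ∑ v ∈ univ.filter (fun v => (u, v) ∈ D), P u v))) ∧
    -- per-node largest probabilities are optimal for a fixed allocation
    (∀ D' : Finset (V × V),
      (∀ u, ∑ v ∈ univ.filter (fun v => (u, v) ∈ D'), P u v < 1) →
      (∀ u, (univ.filter (fun v => (u, v) ∈ D')).card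
              = (univ.filter (fun v => (u, v) ∈ D)).card) →
      (∀ u, ∀ v ∈ univ.filter (fun v => (u, v) ∈ D'),
        ∀ w ∈ univ.filter (fun w => (u, w) ∉ D'), P u w ≤ P u v) →
      ∑ u, x u * (1 - ∑ v ∈ univ.filter (fun v => (u, v) ∈ D'), P u v) *
          ∑ v ∈ univ.filter (fun v => (u, v) ∉ D'),
            (P u v / (1 - ∑ w ∈ univ.filter (fun w => (u, w) ∈ D'), P u w)) *
              (1 - P u v / (1 - ∑ w ∈ univ.filter (fun w => (u, w) ∈ D'), P u w))
        ≤ ∑ u, x u * (1 - ∑ v ∈ univ.filter (fun v => (u, v) ∈ D), P u v) *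
            ∑ v ∈ univ.filter (fun v => (u, v) ∉ D),
              (P u v / (1 - ∑ w ∈ univ.filter (fun w => (u, w) ∈ D), P u w)) *
                (1 - P u v / (1 - ∑ w ∈ univ.filter (fun w => (u, w) ∈ D), P u w))) := by
  have hcompl : ∀ (E : Finset (V × V)) (u : V),
      univ.filter (fun v => (u, v) ∉ E) = univ \ univ.filter (fun v => (u, v) ∈ E) := by
    intro E u; ext v; simp
  have hT : ∀ (E : Finset (V × V)) (u : V),
      ∑ v ∈ univ \ univ.filter (fun v => (u, v) ∈ E), P u v
        = 1 - ∑ v ∈ univ.filter (fun v => (u, v) ∈ E), P u v := by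
    intro E u
    rw [Finset.sum_sdiff_eq_sub (Finset.filter_subset _ _), hrow u]
  constructor
  · apply Finset.sum_congr rfl
    intro u _
    have ht : (1 - ∑ v ∈ univ.filter (fun v => (u, v) ∈ D), P u v) ≠ 0 := by
      have := hρ u; intro h; linarith
    rw [hcompl D u, mul_assoc, sum_sq_expand (P u) _ _ ht (hT D u)]
  · intro D' hρ' hcard hbig
    apply Finset.sum_le_sum
    intro u _
    have ht : (0:ℝ) < 1 - ∑ v ∈ univ.filter (fun v => (u, v) ∈ D), P u v := by
      linarith [hρ u]
    have ht' : (0:ℝ) < 1 - ∑ v ∈ univ.filter (fun v => (u, v) ∈ D'), P u v := by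
      linarith [hρ' u]
    rw [hcompl D u, hcompl D' u, mul_assoc, mul_assoc,
      sum_sq_expand (P u) _ _ ht.ne' (hT D u),
      sum_sq_expand (P u) _ _ ht'.ne' (hT D' u)]
    apply mul_le_mul_of_nonneg_left _ (hx u)
    have hbig' : ∀ v ∈ univ.filter (fun v => (u, v) ∈ D'),
        ∀ w ∉ univ.filter (fun v => (u, v) ∈ D'), P u w ≤ P u v := by
      intro v hv w hw
      refine hbig u v hv w ?_
      simp only [mem_filter, mem_univ, true_and] at hw ⊢
      exact hw
    have htB : 0 < ∑ v ∈ univ \ univ.filter (fun v => (u, v) ∈ D'), P u v := by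
      rw [hT D' u]; exact ht'
    have htS : 0 < ∑ v ∈ univ \ univ.filter (fun v => (u, v) ∈ D), P u v := by
      rw [hT D u]; exact ht
    have hkey := g_le_big (P u) (fun v => hP0 u v)
      (univ.filter (fun v => (u, v) ∈ D')) hbig' htB
      ((univ.filter (fun v => (u, v) ∈ D)) \ (univ.filter (fun v => (u, v) ∈ D'))).card
      (univ.filter (fun v => (u, v) ∈ D)) rfl (hcard u).symm htS
    rw [hT D u, hT D' u] at hkey
    exact hkey
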